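/- arXiv:2104.14091 — 3 statements merged into one kernel-verified Lean document; each statement's English description precedes it below -/
import Mathlib

section
/- Suppose P is a joint distribution of (X, Y1, Y2) with Y1 and Y2 conditionally independent given X, and let gamma(x) = P(Y1=1 or Y2=1 | X=x) > 0. Define Q as P conditioned on the event {Y1=1 or Y2=1}, and let q1(x) = Q(Y1=1 | X=x), q2(x) = Q(Y2=1 | X=x), q12(x) = Q(Y1=1, Y2=1 | X=x). Then for all x with q12(x) > 0, gamma(x) = q12(x) / (q1(x) * q2(x)). -/
/-- Identification of the conditional capture probability: if `Y1 ⊥ Y2 | X`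
under `P` (i.e. `p12 = p1 * p2` for the conditional probabilities under `P`),
`gamma(x) = P(Y1=1 or Y2=1 | X=x) > 0`, and the observed `q`-probabilities are
the `P`-conditional probabilities rescaled by `gamma(x)` (conditioning on
capture), then wherever `q12(x) > 0` we have
`gamma(x) = q12(x) / (q1(x) * q2(x))`. -/
theorem conditional_capture_identification {X : Type*}
    (p1 p2 p12 gamma q1 q2 q12 : X → ℝ)
    -- conditional independence of the two lists given X, under P
    (hindep : ∀ x, p12 x = p1 x * p2 x)
    -- gamma(x) = P(Y1 = 1 or Y2 = 1 | X = x), by inclusion-exclusion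
    (hgamma : ∀ x, gamma x = p1 x + p2 x - p12 x)
    (hgamma_pos : ∀ x, 0 < gamma x)
    -- Q is P conditioned on capture: conditional probabilities rescale by gamma
    (hq1 : ∀ x, q1 x = p1 x / gamma x)
    (hq2 : ∀ x, q2 x = p2 x / gamma x)
    (hq12 : ∀ x, q12 x = p12 x / gamma x) :
    ∀ x, 0 < q12 x → gamma x = q12 x / (q1 x * q2 x) := by
  intro x hq
  have hg := hgamma_pos x
  have hgne : gamma x ≠ 0 := ne_of_gt hg
  have hp12 : p12 x ≠ 0 := by
    intro h
    rw [hq12 x, h] at hq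
    simp at hq
  have hp1 : p1 x ≠ 0 := fun h => hp12 (by rw [hindep x, h, zero_mul])
  have hp2 : p2 x ≠ 0 := fun h => hp12 (by rw [hindep x, h, mul_zero])
  rw [hq1 x, hq2 x, hq12 x, hindep x]
  field_simp
end

section
/- With phi as the efficient influence function defined by phi(Z) = (1/gamma(X)) * ( Y1/q1(X) + Y2/q2(X) - Y1 Y2/q12(X) ) - 1/psi, the conditional variance given X satisfies Var_Q(phi | X) = (1/gamma(X)^2) * ( 2*gamma(X) - 1/q1(X) - 1/q2(X) + 1/q12(X) - 1 ), where gamma(x) = q12(x)/(q1(x)q2(x)). Consequently, Var_Q(phi) = Var_Q(1/gamma(X)) + E_Q[ (1/gamma(X)^2) ( 2 gamma(X) - 1/q1(X) - 1/q2(X) + 1/q12(X) - 1 ) ]. -/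
open MeasureTheory

/-- Expectation of `f(Y1, Y2)` under a conditional distribution
`p` of the pair of Bernoulli list indicators. -/
noncomputable def condMean (p : PMF (Bool × Bool)) (f : Bool × Bool → ℝ) : ℝ :=
  ∑ y : Bool × Bool, (p y).toReal * f y

lemma pmf_sum4 (p : PMF (Bool × Bool)) :
    (p (true,true)).toReal + (p (true,false)).toReal + (p (false,true)).toReal
      + (p (false,false)).toReal = 1 := by
  have h := p.tsum_coe
  rw [tsum_fintype] at h
  have h2 := congrArg ENNReal.toReal h
  rw [ENNReal.toReal_sum (fun y _ => p.apply_ne_top y)] at h2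
  simp [Fintype.sum_prod_type] at h2
  linarith

section Aux

variable (p : PMF (Bool × Bool)) (q1 q2 q12 g ψ : ℝ)
    (hq1 : q1 = condMean p (fun y => if y.1 then 1 else 0))
    (hq2 : q2 = condMean p (fun y => if y.2 then 1 else 0))
    (hq12 : q12 = condMean p (fun y => if y.1 ∧ y.2 then 1 else 0))
    (h1 : 0 < q1) (h2 : 0 < q2) (h12 : 0 < q12)
    (hg : g = q12 / (q1 * q2))
    (φ : Bool × Bool → ℝ)
    (hφ : ∀ y, φ y = (1 / g) * ((if y.1 then (1:ℝ) else 0) / q1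
        + (if y.2 then (1:ℝ) else 0) / q2
        - (if y.1 ∧ y.2 then (1:ℝ) else 0) / q12) - ψ)

include hq1 hq2 hq12 h1 h2 h12 hg hφ

lemma mean_eq : condMean p φ = 1 / g - ψ := by
  have hq1' : q1 = (p (true,true)).toReal + (p (true,false)).toReal := by
    rw [hq1]; simp [condMean, Fintype.sum_prod_type]
  have hq2' : q2 = (p (true,true)).toReal + (p (false,true)).toReal := by
    rw [hq2]; simp [condMean, Fintype.sum_prod_type]
  have hq12' : q12 = (p (true,true)).toReal := by
    rw [hq12]; simp [condMean, Fintype.sum_prod_type]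
  have hs := pmf_sum4 p
  simp only [condMean, Fintype.sum_prod_type, hφ]
  subst hg hq1' hq2' hq12'
  simp only [Fintype.sum_bool]
  norm_num
  set a := (p (true,true)).toReal with haa
  set b := (p (true,false)).toReal with hbb
  set c := (p (false,true)).toReal with hcc
  set d := (p (false,false)).toReal with hdd
  have hab : a + b ≠ 0 := ne_of_gt h1
  have hac : a + c ≠ 0 := ne_of_gt h2
  have ha : a ≠ 0 := ne_of_gt h12
  clear_value a b c d
  clear hq1 hq2 hq12 hφ haa hbb hcc hdd
  have hd : d = 1 - a - b - c := by linarith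
  subst hd
  field_simp
  ring

set_option maxHeartbeats 2000000 in
lemma m2_eq : condMean p (fun y => (φ y)^2)
    = (1 / g ^ 2) * (2 * g - 1 / q1 - 1 / q2 + 1 / q12) - 2 * ψ * (1 / g) + ψ ^ 2 := by
  have hq1' : q1 = (p (true,true)).toReal + (p (true,false)).toReal := by
    rw [hq1]; simp [condMean, Fintype.sum_prod_type]
  have hq2' : q2 = (p (true,true)).toReal + (p (false,true)).toReal := by
    rw [hq2]; simp [condMean, Fintype.sum_prod_type]
  have hq12' : q12 = (p (true,true)).toReal := by
    rw [hq12]; simp [condMean, Fintype.sum_prod_type]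
  have hs := pmf_sum4 p
  simp only [condMean, Fintype.sum_prod_type, hφ]
  subst hg hq1' hq2' hq12'
  simp only [Fintype.sum_bool]
  norm_num
  set a := (p (true,true)).toReal with haa
  set b := (p (true,false)).toReal with hbb
  set c := (p (false,true)).toReal with hcc
  set d := (p (false,false)).toReal with hdd
  have hab : a + b ≠ 0 := ne_of_gt h1
  have hac : a + c ≠ 0 := ne_of_gt h2
  have ha : a ≠ 0 := ne_of_gt h12
  clear_value a b c d
  clear hq1 hq2 hq12 hφ haa hbb hcc hdd
  have hd : d = 1 - a - b - c := by linarith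
  subst hd
  field_simp
  ring

end Aux

/-- Conditional and total variance of the efficient influence function.  With
`(Y1, Y2)` Bernoulli given `X = x` with moments `q1(x), q2(x), q12(x)`,
`γ = q12/(q1 q2)` and `1/ψ = E_Q[1/γ(X)]`, the conditional variance of
`φ` given `X` equals `(1/γ²)(2γ - 1/q1 - 1/q2 + 1/q12 - 1)`, and by the law of
total variance `Var_Q(φ) = Var_Q(1/γ(X)) + E_Q[(1/γ²)(2γ - 1/q1 - 1/q2 + 1/q12 - 1)]`. -/
theorem eif_conditional_and_total_variance {X : Type*} [MeasurableSpace X]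
    (ν : Measure X) [IsProbabilityMeasure ν]
    (κ : X → PMF (Bool × Bool))
    (q1 q2 q12 gamma : X → ℝ)
    (hq1 : ∀ x, q1 x = condMean (κ x) (fun y => if y.1 then 1 else 0))
    (hq2 : ∀ x, q2 x = condMean (κ x) (fun y => if y.2 then 1 else 0))
    (hq12 : ∀ x, q12 x = condMean (κ x) (fun y => if y.1 ∧ y.2 then 1 else 0))
    (hpos : ∀ x, 0 < q1 x ∧ 0 < q2 x ∧ 0 < q12 x)
    (hgamma : ∀ x, gamma x = q12 x / (q1 x * q2 x))
    (ψinv : ℝ) (hψinv : ψinv = ∫ x, 1 / gamma x ∂ν)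
    (φ : X → Bool × Bool → ℝ)
    (hφ : ∀ x y, φ x y = (1 / gamma x) * ((if y.1 then (1:ℝ) else 0) / q1 x
        + (if y.2 then (1:ℝ) else 0) / q2 x
        - (if y.1 ∧ y.2 then (1:ℝ) else 0) / q12 x) - ψinv)
    -- integrability over the covariate distribution
    (hint1 : Integrable (fun x => 1 / gamma x) ν)
    (hint2 : Integrable (fun x => (1 / gamma x) ^ 2) ν)
    (hintm : Integrable (fun x => condMean (κ x) (φ x)) ν)
    (hintm2 : Integrable (fun x => condMean (κ x) (fun y => (φ x y) ^ 2)) ν)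
    (hintv : Integrable (fun x => (1 / gamma x ^ 2) *
        (2 * gamma x - 1 / q1 x - 1 / q2 x + 1 / q12 x - 1)) ν) :
    -- conditional variance of φ given X = x
    (∀ x, condMean (κ x) (fun y => (φ x y) ^ 2) - (condMean (κ x) (φ x)) ^ 2
        = (1 / gamma x ^ 2) * (2 * gamma x - 1 / q1 x - 1 / q2 x + 1 / q12 x - 1))
    -- total variance decomposition
    ∧ (∫ x, condMean (κ x) (fun y => (φ x y) ^ 2) ∂ν)
        - (∫ x, condMean (κ x) (φ x) ∂ν) ^ 2
      = ((∫ x, (1 / gamma x) ^ 2 ∂ν) - (∫ x, 1 / gamma x ∂ν) ^ 2)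
        + ∫ x, (1 / gamma x ^ 2) *
            (2 * gamma x - 1 / q1 x - 1 / q2 x + 1 / q12 x - 1) ∂ν := by
  have hgne : ∀ x, gamma x ≠ 0 := by
    intro x
    rw [hgamma x]
    obtain ⟨ha, hb, hc⟩ := hpos x
    positivity
  have hq1ne : ∀ x, q1 x ≠ 0 := fun x => ne_of_gt (hpos x).1
  have hq2ne : ∀ x, q2 x ≠ 0 := fun x => ne_of_gt (hpos x).2.1
  have hq12ne : ∀ x, q12 x ≠ 0 := fun x => ne_of_gt (hpos x).2.2
  have hmean : ∀ x, condMean (κ x) (φ x) = 1 / gamma x - ψinv := fun x =>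
    mean_eq (κ x) (q1 x) (q2 x) (q12 x) (gamma x) ψinv (hq1 x) (hq2 x) (hq12 x)
      (hpos x).1 (hpos x).2.1 (hpos x).2.2 (hgamma x) (φ x) (hφ x)
  have hm2 : ∀ x, condMean (κ x) (fun y => (φ x y) ^ 2)
      = (1 / gamma x ^ 2) * (2 * gamma x - 1 / q1 x - 1 / q2 x + 1 / q12 x)
        - 2 * ψinv * (1 / gamma x) + ψinv ^ 2 := fun x =>
    m2_eq (κ x) (q1 x) (q2 x) (q12 x) (gamma x) ψinv (hq1 x) (hq2 x) (hq12 x)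
      (hpos x).1 (hpos x).2.1 (hpos x).2.2 (hgamma x) (φ x) (hφ x)
  have hvar : ∀ x, condMean (κ x) (fun y => (φ x y) ^ 2) - (condMean (κ x) (φ x)) ^ 2
      = (1 / gamma x ^ 2) * (2 * gamma x - 1 / q1 x - 1 / q2 x + 1 / q12 x - 1) := by
    intro x
    rw [hmean x, hm2 x]
    have := hgne x
    field_simp
    ring
  refine ⟨hvar, ?_⟩
  -- rewrite the two integrands
  have e1 : (fun x => condMean (κ x) (φ x)) = fun x => 1 / gamma x - ψinv := funext hmean
  have e2 : (fun x => condMean (κ x) (fun y => (φ x y) ^ 2))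
      = fun x => ((1 / gamma x - ψinv) ^ 2
          + (1 / gamma x ^ 2) * (2 * gamma x - 1 / q1 x - 1 / q2 x + 1 / q12 x - 1)) := by
    funext x
    have h := hvar x
    rw [hmean x] at h
    linarith
  have hintsq : Integrable (fun x => (1 / gamma x - ψinv) ^ 2) ν := by
    have : (fun x => (1 / gamma x - ψinv) ^ 2)
        = fun x => (1 / gamma x) ^ 2 - (2 * ψinv) * (1 / gamma x) + ψinv ^ 2 := by
      funext x; ring
    rw [this]
    exact (hint2.sub (hint1.const_mul (2 * ψinv))).add (integrable_const _)
  have hsub : Integrable (fun x => (1 / gamma x) ^ 2 - (2 * ψinv) * (1 / gamma x)) ν := by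
    exact hint2.sub (hint1.const_mul (2 * ψinv))
  have Imean : (∫ x, condMean (κ x) (φ x) ∂ν) = 0 := by
    rw [e1, integral_sub hint1 (integrable_const _), integral_const, probReal_univ, ← hψinv]
    simp only [ENNReal.toReal_one, one_smul]
    ring
  have Isq : (∫ x, (1 / gamma x - ψinv) ^ 2 ∂ν)
      = (∫ x, (1 / gamma x) ^ 2 ∂ν) - ψinv ^ 2 := by
    have h : ∀ x, (1 / gamma x - ψinv) ^ 2
        = (1 / gamma x) ^ 2 - (2 * ψinv) * (1 / gamma x) + ψinv ^ 2 := fun x => by ring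
    simp_rw [h]
    rw [integral_add hsub (integrable_const _),
      integral_sub hint2 (hint1.const_mul (2 * ψinv)), integral_const, probReal_univ,
      integral_const_mul, ← hψinv]
    simp only [ENNReal.toReal_one, one_smul]
    ring
  have Im2 : (∫ x, condMean (κ x) (fun y => (φ x y) ^ 2) ∂ν)
      = (∫ x, (1 / gamma x - ψinv) ^ 2 ∂ν)
        + ∫ x, (1 / gamma x ^ 2) * (2 * gamma x - 1 / q1 x - 1 / q2 x + 1 / q12 x - 1) ∂ν := by
    rw [e2, integral_add hintsq hintv]
  rw [Im2, Imean, Isq, ← hψinv]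
  ring
end

section
/- Let qbar1, qbar2, qbar12 be positive functions with gammabar = qbar12/(qbar1 qbar2), and let q1, q2, q12, gamma = q12/(q1 q2) be the true functions. Then pointwise for each x: (1/gammabar)( q1/qbar1 + q2/qbar2 - q12/qbar12 ) - 1/gamma = (1/qbar12) [ (q1 - qbar1)(qbar2 - q2) + (q12 - qbar12)(1/gamma - 1/gammabar) ]. -/
/-- The key second-order remainder identity underlying the doubly robust
estimator, pointwise in the covariate `x`. -/
theorem second_order_remainder_identity {X : Type*}
    (q1 q2 q12 qb1 qb2 qb12 : X → ℝ)
    (h1 : ∀ x, 0 < q1 x) (h2 : ∀ x, 0 < q2 x) (h12 : ∀ x, 0 < q12 x)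
    (hb1 : ∀ x, 0 < qb1 x) (hb2 : ∀ x, 0 < qb2 x) (hb12 : ∀ x, 0 < qb12 x)
    (gamma gammab : X → ℝ)
    (hg : ∀ x, gamma x = q12 x / (q1 x * q2 x))
    (hgb : ∀ x, gammab x = qb12 x / (qb1 x * qb2 x)) :
    ∀ x, (1 / gammab x) * (q1 x / qb1 x + q2 x / qb2 x - q12 x / qb12 x)
        - 1 / gamma x
      = (1 / qb12 x) * ((q1 x - qb1 x) * (qb2 x - q2 x)
          + (q12 x - qb12 x) * (1 / gamma x - 1 / gammab x)) := by
  intro x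
  have e1 := (h1 x).ne'
  have e2 := (h2 x).ne'
  have e12 := (h12 x).ne'
  have eb1 := (hb1 x).ne'
  have eb2 := (hb2 x).ne'
  have eb12 := (hb12 x).ne'
  rw [hg x, hgb x]
  field_simp
  ring
end
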